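/- arXiv:2307.04393 — 3 statements merged into one kernel-verified Lean document; each statement's English description precedes it below -/
import Mathlib

section
/- Let K ⊂ ℝⁿ be a compact set and let z ∈ ℝⁿ be such that both 0 and z belong to the interior of the convex hull of K. Then (K − z)° = F_{−z}(K°), where F_{−z}(y) = y/(1 − ⟨y,z⟩), and consequently |(K − z)°| = ∫_{K°} (1 − ⟨z,x⟩)^{−(n+1)} dx. -/
open MeasureTheory Set
open scoped RealInnerProductSpace ENNReal Pointwise

/-- The polar of a set `A ⊆ ℝⁿ`: `A° = {y : ⟨x,y⟩ ≤ 1 for all x ∈ A}`. -/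
def polarSet {n : ℕ} (A : Set (EuclideanSpace ℝ (Fin n))) : Set (EuclideanSpace ℝ (Fin n)) :=
  {y | ∀ x ∈ A, ⟪x, y⟫ ≤ 1}

lemma polarSet_hull_bound {n : ℕ} {A : Set (EuclideanSpace ℝ (Fin n))}
    {y : EuclideanSpace ℝ (Fin n)} (hy : y ∈ polarSet A) :
    ∀ x ∈ convexHull ℝ A, ⟪x, y⟫ ≤ 1 := by
  intro x hx
  have hconv : Convex ℝ {x : EuclideanSpace ℝ (Fin n) | ⟪x, y⟫ ≤ 1} :=
    convex_halfSpace_le ⟨fun a b => inner_add_left a b y,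
      fun c a => by rw [real_inner_smul_left]; rfl⟩ 1
  exact convexHull_min hy hconv hx

lemma inner_lt_one_of_mem_interior {n : ℕ} {A : Set (EuclideanSpace ℝ (Fin n))}
    {w y : EuclideanSpace ℝ (Fin n)} (hw : w ∈ interior (convexHull ℝ A))
    (hy : y ∈ polarSet A) : ⟪w, y⟫ < 1 := by
  rcases eq_or_ne y 0 with rfl | hy0
  · simpa using zero_lt_one
  · obtain ⟨ε, hε, hball⟩ := Metric.isOpen_iff.1 isOpen_interior w hw
    have hnorm : (0:ℝ) < ‖y‖ := norm_pos_iff.2 hy0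
    set c : ℝ := ε / (2 * ‖y‖) with hc
    have hcpos : 0 < c := div_pos hε (by positivity)
    have hx : w + c • y ∈ convexHull ℝ A := by
      refine interior_subset (hball ?_)
      have : dist (w + c • y) w = c * ‖y‖ := by
        rw [dist_eq_norm, add_sub_cancel_left, norm_smul, Real.norm_eq_abs,
          abs_of_pos hcpos]
      have hcy : c * ‖y‖ = ε / 2 := by
        rw [hc]; field_simp
      rw [Metric.mem_ball, this, hcy]
      linarith
    have h1 := polarSet_hull_bound hy _ hx
    rw [inner_add_left, real_inner_smul_left, real_inner_self_eq_norm_sq] at h1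
    nlinarith [mul_pos hcpos (pow_pos hnorm 2)]

lemma det_formula {n : ℕ} (z y : EuclideanSpace ℝ (Fin n)) (ht : (0:ℝ) < 1 - ⟪y, z⟫) :
    (((1 - ⟪y, z⟫)⁻¹ • ContinuousLinearMap.id ℝ (EuclideanSpace ℝ (Fin n)) +
      (((1 - ⟪y, z⟫) ^ 2)⁻¹ • innerSL ℝ z).smulRight y).det : ℝ)
      = ((1 - ⟪y, z⟫) ^ (n+1))⁻¹ := by
  set t := 1 - ⟪y, z⟫ with hts
  have ht0 : t ≠ 0 := ne_of_gt ht
  set b := (EuclideanSpace.basisFun (Fin n) ℝ).toBasis with hbdef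
  rw [ContinuousLinearMap.det, ← LinearMap.det_toMatrix b]
  have hM : (LinearMap.toMatrix b b
      ((((t⁻¹ • ContinuousLinearMap.id ℝ _ +
      ((t ^ 2)⁻¹ • innerSL ℝ z).smulRight y)) : _ →L[ℝ] _).toLinearMap))
      = t⁻¹ • (1 + Matrix.vecMulVec (t⁻¹ • (y : Fin n → ℝ)) (z : Fin n → ℝ)) := by
    ext i j
    simp only [LinearMap.toMatrix_apply, hbdef, OrthonormalBasis.coe_toBasis,
      OrthonormalBasis.coe_toBasis_repr_apply, OrthonormalBasis.repr_apply_apply,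
      EuclideanSpace.basisFun_apply, ContinuousLinearMap.coe_coe,
      ContinuousLinearMap.add_apply, ContinuousLinearMap.smul_apply,
      ContinuousLinearMap.id_apply, ContinuousLinearMap.smulRight_apply,
      innerSL_apply_apply, Matrix.smul_apply, Matrix.add_apply, Matrix.one_apply,
      Matrix.vecMulVec_apply, Pi.smul_apply, smul_eq_mul]
    simp only [inner_add_right, real_inner_smul_right, EuclideanSpace.inner_single_left,
      EuclideanSpace.inner_single_right, EuclideanSpace.single_apply, map_one, one_mul,
      PiLp.smul_apply, smul_eq_mul, starRingEnd_apply, star_trivial]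
    rcases eq_or_ne i j with h | h
    · simp only [h, if_pos rfl, if_true, ← inv_pow]; ring
    · simp only [h, Ne.symm h, if_false, if_neg h, ← inv_pow]; ring
  rw [hM, Matrix.det_smul, Matrix.vecMulVec_eq (Fin 1), Matrix.det_one_add_replicateCol_mul_replicateRow]
  have hdv : dotProduct (z : Fin n → ℝ) (t⁻¹ • (y : Fin n → ℝ)) = t⁻¹ * ⟪y, z⟫ := by
    simp only [dotProduct, PiLp.inner_apply, RCLike.inner_apply, starRingEnd_apply,
      star_trivial, PiLp.smul_apply, Pi.smul_apply, smul_eq_mul, Finset.mul_sum]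
    exact Finset.sum_congr rfl fun i _ => by ring
  rw [hdv]
  have h2 : 1 + t⁻¹ * ⟪y, z⟫ = t⁻¹ := by
    have hyz : ⟪y, z⟫ = 1 - t := by rw [hts]; ring
    rw [hyz]; field_simp; ring
  rw [h2, Fintype.card_fin, pow_succ, mul_inv]
  ring

/-- If `K ⊆ ℝⁿ` is compact and `0, z` belong to the interior of the convex hull of `K`, then
`(K − z)° = F_{−z}(K°)` where `F_{−z}(y) = y/(1 − ⟨y,z⟩)`, and consequently
`|(K − z)°| = ∫_{K°} (1 − ⟨z,x⟩)^{−(n+1)} dx`. -/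
theorem polar_translate (n : ℕ) (K : Set (EuclideanSpace ℝ (Fin n)))
    (hKcomp : IsCompact K) (z : EuclideanSpace ℝ (Fin n))
    (h0 : (0 : EuclideanSpace ℝ (Fin n)) ∈ interior (convexHull ℝ K))
    (hz : z ∈ interior (convexHull ℝ K)) :
    polarSet ((fun x => x - z) '' K)
        = (fun y => (1 - ⟪y, z⟫)⁻¹ • y) '' polarSet K ∧
    volume (polarSet ((fun x => x - z) '' K))
        = ∫⁻ x in polarSet K, ENNReal.ofReal (((1 - ⟪z, x⟫) ^ (n + 1))⁻¹) := by
  set f : EuclideanSpace ℝ (Fin n) → EuclideanSpace ℝ (Fin n) :=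
    fun y => (1 - ⟪y, z⟫)⁻¹ • y with hf
  -- positivity of 1 - ⟨y,z⟩ on the polar of K
  have hpos : ∀ y ∈ polarSet K, (0:ℝ) < 1 - ⟪y, z⟫ := by
    intro y hy
    have h1 : ⟪z, y⟫ < 1 := inner_lt_one_of_mem_interior hz hy
    rw [real_inner_comm] at h1
    linarith
  -- the translated set and its interior point
  have himgK : (fun x => x - z) '' K = (-z) +ᵥ K := by
    rw [← Set.image_vadd]
    exact Set.image_congr fun x _ => by simp [vadd_eq_add, sub_eq_neg_add]
  have hmz : (-z) ∈ interior (convexHull ℝ ((fun x => x - z) '' K)) := by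
    rw [himgK, convexHull_vadd, interior_vadd]
    exact ⟨0, h0, by simp⟩
  have hpos2 : ∀ y ∈ polarSet ((fun x => x - z) '' K), (0:ℝ) < 1 + ⟪y, z⟫ := by
    intro y hy
    have h1 : ⟪-z, y⟫ < 1 := inner_lt_one_of_mem_interior hmz hy
    rw [inner_neg_left, real_inner_comm] at h1
    linarith
  -- set equality
  have heq : polarSet ((fun x => x - z) '' K) = f '' polarSet K := by
    ext y
    constructor
    · intro hy
      have hs : (0:ℝ) < 1 + ⟪y, z⟫ := hpos2 y hy
      refine ⟨(1 + ⟪y, z⟫)⁻¹ • y, ?_, ?_⟩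
      · intro x hx
        have h1 : ⟪x - z, y⟫ ≤ 1 := hy _ ⟨x, hx, rfl⟩
        rw [inner_sub_left] at h1
        have h2 : ⟪x, y⟫ ≤ 1 + ⟪y, z⟫ := by
          have hcm : ⟪z, y⟫ = ⟪y, z⟫ := real_inner_comm y z
          linarith
        rw [real_inner_smul_right]
        calc (1 + ⟪y, z⟫)⁻¹ * ⟪x, y⟫ ≤ (1 + ⟪y, z⟫)⁻¹ * (1 + ⟪y, z⟫) :=
              mul_le_mul_of_nonneg_left h2 (le_of_lt (inv_pos.2 hs))
          _ = 1 := inv_mul_cancel₀ (ne_of_gt hs)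
      · show (1 - ⟪(1 + ⟪y, z⟫)⁻¹ • y, z⟫)⁻¹ • ((1 + ⟪y, z⟫)⁻¹ • y) = y
        rw [real_inner_smul_left]
        have h3 : 1 - (1 + ⟪y, z⟫)⁻¹ * ⟪y, z⟫ = (1 + ⟪y, z⟫)⁻¹ := by
          have hs' : (1 + ⟪y, z⟫ : ℝ) ≠ 0 := ne_of_gt hs
          generalize hgen : (⟪y, z⟫ : ℝ) = a at hs' ⊢
          field_simp
          ring
        rw [h3, inv_inv, smul_smul, mul_inv_cancel₀ (ne_of_gt hs), one_smul]
    · rintro ⟨w, hw, rfl⟩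
      rintro x ⟨x0, hx0, rfl⟩
      have ht := hpos w hw
      have h1 : ⟪x0, w⟫ ≤ 1 := hw x0 hx0
      show ⟪x0 - z, (1 - ⟪w, z⟫)⁻¹ • w⟫ ≤ 1
      rw [real_inner_smul_right, inner_sub_left]
      have h2 : ⟪x0, w⟫ - ⟪z, w⟫ ≤ 1 - ⟪w, z⟫ := by
        have hcm : ⟪z, w⟫ = ⟪w, z⟫ := real_inner_comm w z
        linarith
      calc (1 - ⟪w, z⟫)⁻¹ * (⟪x0, w⟫ - ⟪z, w⟫) ≤ (1 - ⟪w, z⟫)⁻¹ * (1 - ⟪w, z⟫) :=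
            mul_le_mul_of_nonneg_left h2 (le_of_lt (inv_pos.2 ht))
        _ = 1 := inv_mul_cancel₀ (ne_of_gt ht)
  refine ⟨heq, ?_⟩
  -- injectivity via explicit inverse
  have hinv : ∀ w ∈ polarSet K, (1 + ⟪f w, z⟫)⁻¹ • (f w) = w := by
    intro w hw
    have ht := hpos w hw
    show (1 + ⟪(1 - ⟪w, z⟫)⁻¹ • w, z⟫)⁻¹ • ((1 - ⟪w, z⟫)⁻¹ • w) = w
    rw [real_inner_smul_left]
    have h3 : 1 + (1 - ⟪w, z⟫)⁻¹ * ⟪w, z⟫ = (1 - ⟪w, z⟫)⁻¹ := by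
      have ht' : (1 - ⟪w, z⟫ : ℝ) ≠ 0 := ne_of_gt ht
      generalize hgen : (⟪w, z⟫ : ℝ) = a at ht' ⊢
      field_simp
      ring
    rw [h3, inv_inv, smul_smul, mul_inv_cancel₀ (ne_of_gt ht), one_smul]
  have hinj : Set.InjOn f (polarSet K) := by
    intro a ha b hb hab
    have := congrArg (fun v => (1 + ⟪v, z⟫)⁻¹ • v) hab
    simpa only [hinv a ha, hinv b hb] using this
  -- closedness / measurability of the polar set
  have hclosed : IsClosed (polarSet K) := by
    have hrw : polarSet K = ⋂ x ∈ K, {y : EuclideanSpace ℝ (Fin n) | ⟪x, y⟫ ≤ 1} := by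
      ext y; simp [polarSet]
    rw [hrw]
    exact isClosed_biInter fun x _ =>
      isClosed_le (Continuous.inner continuous_const continuous_id) continuous_const
  -- derivative of f on the polar set
  set A : EuclideanSpace ℝ (Fin n) → (EuclideanSpace ℝ (Fin n) →L[ℝ] EuclideanSpace ℝ (Fin n)) := fun y =>
    (1 - ⟪y, z⟫)⁻¹ • ContinuousLinearMap.id ℝ (EuclideanSpace ℝ (Fin n)) +
      (((1 - ⟪y, z⟫) ^ 2)⁻¹ • innerSL ℝ z).smulRight y with hA
  have hderiv : ∀ y ∈ polarSet K, HasFDerivWithinAt f (A y) (polarSet K) y := by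
    intro y hy
    have ht := hpos y hy
    have h1 : HasFDerivAt (fun v : EuclideanSpace ℝ (Fin n) => 1 - ⟪v, z⟫) (-(innerSL ℝ z : EuclideanSpace ℝ (Fin n) →L[ℝ] ℝ)) y := by
      have h1a : HasFDerivAt (fun v : EuclideanSpace ℝ (Fin n) => ⟪v, z⟫) (innerSL ℝ z : EuclideanSpace ℝ (Fin n) →L[ℝ] ℝ) y := by
        have h1b := (innerSL ℝ z : EuclideanSpace ℝ (Fin n) →L[ℝ] ℝ).hasFDerivAt (x := y)
        have h1c : (fun v : EuclideanSpace ℝ (Fin n) => ⟪v, z⟫) = fun v : EuclideanSpace ℝ (Fin n) => ⟪z, v⟫ :=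
          funext fun v => real_inner_comm z v
        rw [h1c]
        exact h1b
      exact h1a.const_sub 1
    have h2 : HasDerivAt Inv.inv (-(((1 - ⟪y, z⟫) : ℝ) ^ 2)⁻¹) (1 - ⟪y, z⟫) :=
      hasDerivAt_inv (ne_of_gt ht)
    have h3 := (h2.hasFDerivAt).comp y h1
    have h4 : HasFDerivAt (fun v : EuclideanSpace ℝ (Fin n) => (1 - ⟪v, z⟫)⁻¹)
        ((((1 - ⟪y, z⟫) ^ 2)⁻¹ • innerSL ℝ z : EuclideanSpace ℝ (Fin n) →L[ℝ] ℝ)) y := by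
      have hmaps :
          ((1 : ℝ →L[ℝ] ℝ).smulRight (-(((1 - ⟪y, z⟫) : ℝ) ^ 2)⁻¹)).comp
              (-(innerSL ℝ z : EuclideanSpace ℝ (Fin n) →L[ℝ] ℝ))
            = (((1 - ⟪y, z⟫) ^ 2)⁻¹ • innerSL ℝ z : EuclideanSpace ℝ (Fin n) →L[ℝ] ℝ) := by
        ext v
        simp only [ContinuousLinearMap.comp_apply, ContinuousLinearMap.smulRight_apply,
          ContinuousLinearMap.neg_apply, ContinuousLinearMap.one_apply,
          ContinuousLinearMap.smul_apply, smul_eq_mul, innerSL_apply_apply]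
        ring
      rw [← hmaps]
      exact h3
    have h5 := h4.smul (hasFDerivAt_id y)
    exact h5.hasFDerivWithinAt
  -- change of variables
  have hvol := lintegral_abs_det_fderiv_eq_addHaar_image volume
    hclosed.measurableSet hderiv hinj
  rw [heq, ← hvol]
  refine setLIntegral_congr_fun hclosed.measurableSet ?_
  intro y hy
  have ht := hpos y hy
  rw [hA]; beta_reduce
  rw [det_formula z y ht]
  rw [abs_of_pos (by positivity)]
  rw [real_inner_comm z y]
end

section
/- Let f : ℝⁿ → (0,∞) ∪ {+∞} be convex and lower semicontinuous, with lim_{t→+∞} f(tx) = +∞ for every x ≠ 0, and whose effective domain has nonempty interior. Then the set C(f) = {(x,s) ∈ ℝⁿ × ℝ : f̂(x,s) ≤ 1} is convex if and only if for every x ≠ 0 the function t ↦ f(tx)/t is nonincreasing on (0,+∞). -/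
open MeasureTheory Set Filter
open scoped RealInnerProductSpace ENNReal Topology

/-- The perspective function `f̂(x,s) = |s|·f(x/|s|)` for `s ≠ 0`, and
`f̂(x,0) = lim_{s→0⁺} s·f(x/s)` (the limit exists by convexity; it is here encoded as a
`limsup`, which agrees with the limit whenever the latter exists). -/
noncomputable def persp {n : ℕ} (f : EuclideanSpace ℝ (Fin n) → ℝ≥0∞)
    (p : EuclideanSpace ℝ (Fin n) × ℝ) : ℝ≥0∞ :=
  if p.2 = 0 then
    Filter.limsup (fun s : ℝ => ENNReal.ofReal s * f (s⁻¹ • p.1)) (nhdsWithin 0 (Set.Ioi 0))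
  else ENNReal.ofReal |p.2| * f (|p.2|⁻¹ • p.1)

/-- The perspective body `C(f) = {(x,s) ∈ ℝⁿ × ℝ : f̂(x,s) ≤ 1}`. -/
noncomputable def perspBody {n : ℕ} (f : EuclideanSpace ℝ (Fin n) → ℝ≥0∞) :
    Set (EuclideanSpace ℝ (Fin n) × ℝ) :=
  {p | persp f p ≤ 1}

section Aux

variable {n : ℕ} (f : EuclideanSpace ℝ (Fin n) → ℝ≥0∞)

lemma persp_of_pos (x : EuclideanSpace ℝ (Fin n)) {σ : ℝ} (hσ : 0 < σ) :
    persp f (x, σ) = ENNReal.ofReal σ * f (σ⁻¹ • x) := by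
  simp [persp, hσ.ne', abs_of_pos hσ]

lemma persp_abs (x : EuclideanSpace ℝ (Fin n)) (s : ℝ) :
    persp f (x, s) = persp f (x, |s|) := by
  rcases eq_or_ne s 0 with h | h
  · simp [h]
  · simp [persp, h, abs_ne_zero.2 h, abs_abs]

lemma persp_eq_div (x : EuclideanSpace ℝ (Fin n)) {σ : ℝ} (hσ : 0 < σ) :
    persp f (x, σ) = f (σ⁻¹ • x) / ENNReal.ofReal σ⁻¹ := by
  rw [persp_of_pos f x hσ, ENNReal.ofReal_inv_of_pos hσ, div_eq_mul_inv, inv_inv, mul_comm]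

lemma persp_zero_eq (x : EuclideanSpace ℝ (Fin n)) :
    persp f (x, 0) =
      Filter.limsup (fun s : ℝ => ENNReal.ofReal s * f (s⁻¹ • x)) (nhdsWithin 0 (Set.Ioi 0)) := by
  simp [persp]

end Aux

lemma persp_mono_pos {n : ℕ} (f : EuclideanSpace ℝ (Fin n) → ℝ≥0∞)
    (hmono : ∀ x : EuclideanSpace ℝ (Fin n), x ≠ 0 →
      AntitoneOn (fun t : ℝ => f (t • x) / ENNReal.ofReal t) (Set.Ioi 0))
    (x : EuclideanSpace ℝ (Fin n)) {σ' σ'' : ℝ} (h0 : 0 < σ') (h : σ' ≤ σ'') :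
    persp f (x, σ') ≤ persp f (x, σ'') := by
  have h0'' : 0 < σ'' := h0.trans_le h
  rcases eq_or_ne x 0 with rfl | hx
  · rw [persp_of_pos f _ h0, persp_of_pos f _ h0'', smul_zero, smul_zero]
    exact mul_le_mul_left (ENNReal.ofReal_le_ofReal h) _
  · rw [persp_eq_div f x h0, persp_eq_div f x h0'']
    exact hmono x hx (Set.mem_Ioi.2 (inv_pos.2 h0'')) (Set.mem_Ioi.2 (inv_pos.2 h0))
      (inv_anti₀ h0 h)

lemma persp_mono {n : ℕ} (f : EuclideanSpace ℝ (Fin n) → ℝ≥0∞)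
    (hmono : ∀ x : EuclideanSpace ℝ (Fin n), x ≠ 0 →
      AntitoneOn (fun t : ℝ => f (t • x) / ENNReal.ofReal t) (Set.Ioi 0))
    (x : EuclideanSpace ℝ (Fin n)) {σ' σ'' : ℝ} (h0 : 0 ≤ σ') (h : σ' ≤ σ'') :
    persp f (x, σ') ≤ persp f (x, σ'') := by
  rcases h0.lt_or_eq with h0' | h0'
  · exact persp_mono_pos f hmono x h0' h
  · rw [← h0'] at h ⊢
    rcases h.lt_or_eq with h'' | h''
    · rw [persp_zero_eq]
      refine Filter.limsup_le_of_le (by isBoundedDefault) ?_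
      have hev : ∀ᶠ s in nhdsWithin (0:ℝ) (Set.Ioi 0), s < σ'' :=
        eventually_nhdsWithin_of_eventually_nhds (eventually_lt_nhds h'')
      filter_upwards [hev, self_mem_nhdsWithin] with s hs1 hs2
      rw [← persp_of_pos f x hs2]
      exact persp_mono_pos f hmono x hs2 hs1.le
    · rw [← h'']

lemma persp_convex_pos {n : ℕ} (f : EuclideanSpace ℝ (Fin n) → ℝ≥0∞)
    (hfconv : ∀ x y : EuclideanSpace ℝ (Fin n), ∀ a b : ℝ, 0 ≤ a → 0 ≤ b → a + b = 1 →
      f (a • x + b • y) ≤ ENNReal.ofReal a * f x + ENNReal.ofReal b * f y)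
    (x₁ x₂ : EuclideanSpace ℝ (Fin n)) {σ₁ σ₂ a b : ℝ}
    (hσ₁ : 0 < σ₁) (hσ₂ : 0 < σ₂) (ha : 0 ≤ a) (hb : 0 ≤ b) (hab : a + b = 1) :
    persp f (a • x₁ + b • x₂, a * σ₁ + b * σ₂) ≤
      ENNReal.ofReal a * persp f (x₁, σ₁) + ENNReal.ofReal b * persp f (x₂, σ₂) := by
  have hs : 0 < a * σ₁ + b * σ₂ := by
    rcases ha.eq_or_lt with h | h
    · have hb1 : b = 1 := by linarith
      rw [← h, hb1]; linarith
    · nlinarith [mul_pos h hσ₁, mul_nonneg hb hσ₂.le]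
  have hs' : a * σ₁ + b * σ₂ ≠ 0 := hs.ne'
  have hσ₁' : σ₁ ≠ 0 := hσ₁.ne'
  have hσ₂' : σ₂ ≠ 0 := hσ₂.ne'
  rw [persp_of_pos f _ hs, persp_of_pos f _ hσ₁, persp_of_pos f _ hσ₂]
  have hw : (a * σ₁ + b * σ₂)⁻¹ • (a • x₁ + b • x₂) =
      (a * σ₁ / (a * σ₁ + b * σ₂)) • (σ₁⁻¹ • x₁) + (b * σ₂ / (a * σ₁ + b * σ₂)) • (σ₂⁻¹ • x₂) := by
    rw [smul_add, smul_smul, smul_smul, smul_smul, smul_smul]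
    congr 1
    · congr 1; field_simp
    · congr 1; field_simp
  have h1 := hfconv (σ₁⁻¹ • x₁) (σ₂⁻¹ • x₂) (a * σ₁ / (a * σ₁ + b * σ₂))
      (b * σ₂ / (a * σ₁ + b * σ₂)) (by positivity) (by positivity) (by field_simp)
  rw [← hw] at h1
  calc ENNReal.ofReal (a * σ₁ + b * σ₂) * f ((a * σ₁ + b * σ₂)⁻¹ • (a • x₁ + b • x₂))
      ≤ ENNReal.ofReal (a * σ₁ + b * σ₂) *
        (ENNReal.ofReal (a * σ₁ / (a * σ₁ + b * σ₂)) * f (σ₁⁻¹ • x₁) +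
         ENNReal.ofReal (b * σ₂ / (a * σ₁ + b * σ₂)) * f (σ₂⁻¹ • x₂)) := mul_le_mul_right h1 _
    _ = ENNReal.ofReal ((a * σ₁ + b * σ₂) * (a * σ₁ / (a * σ₁ + b * σ₂))) * f (σ₁⁻¹ • x₁) +
        ENNReal.ofReal ((a * σ₁ + b * σ₂) * (b * σ₂ / (a * σ₁ + b * σ₂))) * f (σ₂⁻¹ • x₂) := by
        rw [mul_add, ← mul_assoc, ← mul_assoc, ← ENNReal.ofReal_mul hs.le, ← ENNReal.ofReal_mul hs.le]
    _ = ENNReal.ofReal a * (ENNReal.ofReal σ₁ * f (σ₁⁻¹ • x₁)) +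
        ENNReal.ofReal b * (ENNReal.ofReal σ₂ * f (σ₂⁻¹ • x₂)) := by
        rw [show (a * σ₁ + b * σ₂) * (a * σ₁ / (a * σ₁ + b * σ₂)) = a * σ₁ by field_simp,
            show (a * σ₁ + b * σ₂) * (b * σ₂ / (a * σ₁ + b * σ₂)) = b * σ₂ by field_simp,
            ENNReal.ofReal_mul ha, ENNReal.ofReal_mul hb, mul_assoc, mul_assoc]

lemma persp_comb {n : ℕ} (f : EuclideanSpace ℝ (Fin n) → ℝ≥0∞)
    (hfconv : ∀ x y : EuclideanSpace ℝ (Fin n), ∀ a b : ℝ, 0 ≤ a → 0 ≤ b → a + b = 1 →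
      f (a • x + b • y) ≤ ENNReal.ofReal a * f x + ENNReal.ofReal b * f y)
    (hmono : ∀ x : EuclideanSpace ℝ (Fin n), x ≠ 0 →
      AntitoneOn (fun t : ℝ => f (t • x) / ENNReal.ofReal t) (Set.Ioi 0))
    (x₁ x₂ : EuclideanSpace ℝ (Fin n)) {σ₁ σ₂ a b : ℝ}
    (hσ₁ : 0 ≤ σ₁) (hσ₂ : 0 ≤ σ₂) (ha : 0 ≤ a) (hb : 0 ≤ b) (hab : a + b = 1)
    (h₁ : persp f (x₁, σ₁) ≤ 1) (h₂ : persp f (x₂, σ₂) ≤ 1) :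
    persp f (a • x₁ + b • x₂, a * σ₁ + b * σ₂) ≤ 1 := by
  have hone : ENNReal.ofReal a + ENNReal.ofReal b = 1 := by
    rw [← ENNReal.ofReal_add ha hb, hab, ENNReal.ofReal_one]
  -- the case where both are positive
  have pos_case : ∀ (y₁ y₂ : EuclideanSpace ℝ (Fin n)) {τ₁ τ₂ : ℝ}, 0 < τ₁ → 0 < τ₂ →
      persp f (y₁, τ₁) ≤ 1 → persp f (y₂, τ₂) ≤ 1 →
      persp f (a • y₁ + b • y₂, a * τ₁ + b * τ₂) ≤ 1 := by
    intro y₁ y₂ τ₁ τ₂ hτ₁ hτ₂ k₁ k₂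
    calc persp f (a • y₁ + b • y₂, a * τ₁ + b * τ₂)
        ≤ ENNReal.ofReal a * persp f (y₁, τ₁) + ENNReal.ofReal b * persp f (y₂, τ₂) :=
          persp_convex_pos f hfconv y₁ y₂ hτ₁ hτ₂ ha hb hab
      _ ≤ ENNReal.ofReal a * 1 + ENNReal.ofReal b * 1 :=
          add_le_add (mul_le_mul_right k₁ _) (mul_le_mul_right k₂ _)
      _ = 1 := by rw [mul_one, mul_one, hone]
  -- the mixed case
  have mixed : ∀ (y₁ y₂ : EuclideanSpace ℝ (Fin n)) {c d τ : ℝ}, 0 < τ → 0 ≤ c → 0 ≤ d →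
      c + d = 1 → persp f (y₁, 0) ≤ 1 → persp f (y₂, τ) ≤ 1 →
      (∀ (z₁ z₂ : EuclideanSpace ℝ (Fin n)) {τ₁ τ₂ : ℝ}, 0 < τ₁ → 0 < τ₂ →
        persp f (z₁, τ₁) ≤ 1 → persp f (z₂, τ₂) ≤ 1 →
        persp f (c • z₁ + d • z₂, c * τ₁ + d * τ₂) ≤ 1) →
      persp f (c • y₁ + d • y₂, c * 0 + d * τ) ≤ 1 := by
    intro y₁ y₂ c d τ hτ hc hd hcd k₁ k₂ poscase
    apply ENNReal.le_of_forall_pos_le_add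
    intro δ hδ _
    have hδ' : (1 : ℝ≥0∞) < 1 + δ :=
      ENNReal.lt_add_right ENNReal.one_ne_top (by exact_mod_cast hδ.ne')
    have hlim : Filter.limsup (fun s : ℝ => ENNReal.ofReal s * f (s⁻¹ • y₁))
        (nhdsWithin 0 (Set.Ioi 0)) < 1 + δ := by
      rw [← persp_zero_eq]; exact lt_of_le_of_lt k₁ hδ'
    obtain ⟨ε, hε1, hε2⟩ :=
      ((eventually_lt_of_limsup_lt hlim).and self_mem_nhdsWithin).exists
    have hε2' : (0:ℝ) < ε := hε2
    have hεle : persp f (y₁, ε) ≤ 1 + δ := by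
      rw [persp_of_pos f _ hε2']; exact hε1.le
    have step1 : persp f (c • y₁ + d • y₂, c * 0 + d * τ) ≤
        persp f (c • y₁ + d • y₂, c * ε + d * τ) := by
      apply persp_mono f hmono
      · nlinarith [mul_nonneg hd hτ.le]
      · nlinarith [mul_nonneg hc hε2'.le]
    refine step1.trans ?_
    -- can't use poscase directly since bound is 1+δ; redo the convexity estimate
    calc persp f (c • y₁ + d • y₂, c * ε + d * τ)
        ≤ ENNReal.ofReal c * persp f (y₁, ε) + ENNReal.ofReal d * persp f (y₂, τ) :=
          persp_convex_pos f hfconv y₁ y₂ hε2' hτ hc hd hcd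
      _ ≤ ENNReal.ofReal c * (1 + δ) + ENNReal.ofReal d * (1 + δ) :=
          add_le_add (mul_le_mul_right hεle _) (mul_le_mul_right (k₂.trans le_self_add) _)
      _ = 1 + δ := by
          rw [← add_mul, ← ENNReal.ofReal_add hc hd, hcd, ENNReal.ofReal_one, one_mul]
  rcases hσ₁.lt_or_eq with h1p | h1z
  · rcases hσ₂.lt_or_eq with h2p | h2z
    · exact pos_case x₁ x₂ h1p h2p h₁ h₂
    · -- σ₂ = 0, σ₁ > 0 : symmetric mixed case
      rw [← h2z] at h₂ ⊢
      have := mixed x₂ x₁ h1p hb ha (by linarith) h₂ h₁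
        (fun z₁ z₂ τ₁ τ₂ hτ₁ hτ₂ k₁ k₂ => by
          have := pos_case z₂ z₁ hτ₂ hτ₁ k₂ k₁
          rwa [add_comm (a • z₂) , add_comm (a * τ₂)] at this)
      rwa [add_comm (b • x₂), add_comm (b * 0)] at this
  · rcases hσ₂.lt_or_eq with h2p | h2z
    · rw [← h1z] at h₁ ⊢
      exact mixed x₁ x₂ h2p ha hb hab h₁ h₂ pos_case
    · -- both zero
      rw [← h1z] at h₁
      rw [← h2z] at h₂
      rw [← h1z, ← h2z]
      rw [mul_zero, mul_zero, add_zero]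
      apply ENNReal.le_of_forall_pos_le_add
      intro δ hδ _
      have hδ' : (1 : ℝ≥0∞) < 1 + δ :=
        ENNReal.lt_add_right ENNReal.one_ne_top (by exact_mod_cast hδ.ne')
      have hlim1 : Filter.limsup (fun s : ℝ => ENNReal.ofReal s * f (s⁻¹ • x₁))
          (nhdsWithin 0 (Set.Ioi 0)) < 1 + δ := by
        rw [← persp_zero_eq]; exact lt_of_le_of_lt h₁ hδ'
      have hlim2 : Filter.limsup (fun s : ℝ => ENNReal.ofReal s * f (s⁻¹ • x₂))
          (nhdsWithin 0 (Set.Ioi 0)) < 1 + δ := by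
        rw [← persp_zero_eq]; exact lt_of_le_of_lt h₂ hδ'
      rw [persp_zero_eq]
      refine Filter.limsup_le_of_le (by isBoundedDefault) ?_
      filter_upwards [eventually_lt_of_limsup_lt hlim1, eventually_lt_of_limsup_lt hlim2,
        self_mem_nhdsWithin] with s hs1 hs2 hs3
      have hs3' : (0:ℝ) < s := hs3
      have hsm : s⁻¹ • (a • x₁ + b • x₂) = a • (s⁻¹ • x₁) + b • (s⁻¹ • x₂) := by
        rw [smul_add, smul_comm, smul_comm s⁻¹ b]
      calc ENNReal.ofReal s * f (s⁻¹ • (a • x₁ + b • x₂))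
          ≤ ENNReal.ofReal s * (ENNReal.ofReal a * f (s⁻¹ • x₁) + ENNReal.ofReal b * f (s⁻¹ • x₂)) := by
            rw [hsm]
            exact mul_le_mul_right (hfconv (s⁻¹ • x₁) (s⁻¹ • x₂) a b ha hb hab) _
        _ = ENNReal.ofReal a * (ENNReal.ofReal s * f (s⁻¹ • x₁)) +
            ENNReal.ofReal b * (ENNReal.ofReal s * f (s⁻¹ • x₂)) := by ring
        _ ≤ ENNReal.ofReal a * (1 + δ) + ENNReal.ofReal b * (1 + δ) :=
            add_le_add (mul_le_mul_right hs1.le _) (mul_le_mul_right hs2.le _)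
        _ = 1 + δ := by
            rw [← add_mul, hone, one_mul]

/-- If `f : ℝⁿ → (0,∞) ∪ {+∞}` is convex, lower semicontinuous, with `f(tx) → +∞` as
`t → +∞` for every `x ≠ 0`, and `dom(f)` has nonempty interior, then the perspective body
`C(f)` is convex iff for every `x ≠ 0` the map `t ↦ f(tx)/t` is nonincreasing on `(0,∞)`. -/
theorem perspBody_convex_iff (n : ℕ) (f : EuclideanSpace ℝ (Fin n) → ℝ≥0∞)
    (hfpos : ∀ x, f x ≠ 0)
    (hfconv : ∀ x y : EuclideanSpace ℝ (Fin n), ∀ a b : ℝ, 0 ≤ a → 0 ≤ b → a + b = 1 →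
      f (a • x + b • y) ≤ ENNReal.ofReal a * f x + ENNReal.ofReal b * f y)
    (hflsc : LowerSemicontinuous f)
    (hftend : ∀ x : EuclideanSpace ℝ (Fin n), x ≠ 0 →
      Tendsto (fun t : ℝ => f (t • x)) atTop (𝓝 ⊤))
    (hdom : (interior {x | f x ≠ ⊤}).Nonempty) :
    Convex ℝ (perspBody f)
      ↔ ∀ x : EuclideanSpace ℝ (Fin n), x ≠ 0 →
          AntitoneOn (fun t : ℝ => f (t • x) / ENNReal.ofReal t) (Set.Ioi 0) := by
  constructor
  · intro hC x hx t₁ ht₁ t₂ ht₂ h12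
    simp only [Set.mem_Ioi] at ht₁ ht₂
    simp only
    set v := f (t₁ • x) / ENNReal.ofReal t₁ with hv
    rcases eq_or_ne v ⊤ with hvt | hvt
    · rw [hvt]; exact le_top
    have hv0 : v ≠ 0 := by
      rw [hv, ne_eq, ENNReal.div_eq_zero_iff]
      push_neg
      exact ⟨hfpos _, ENNReal.ofReal_ne_top⟩
    set c := v.toReal with hc
    have hcpos : 0 < c := ENNReal.toReal_pos hv0 hvt
    have hcv : ENNReal.ofReal c = v := ENNReal.ofReal_toReal hvt
    set y := c⁻¹ • x with hy
    have key : ∀ t : ℝ, 0 < t →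
        persp f (y, (c * t)⁻¹) = f (t • x) / (ENNReal.ofReal c * ENNReal.ofReal t) := by
      intro t ht
      have hct : 0 < c * t := mul_pos hcpos ht
      rw [persp_of_pos f _ (inv_pos.2 hct), inv_inv, hy, smul_smul,
          show c * t * c⁻¹ = t by field_simp,
          ENNReal.ofReal_inv_of_pos hct, ENNReal.ofReal_mul hcpos.le,
          div_eq_mul_inv, mul_comm]
    set σ := (c * t₁)⁻¹ with hσdef
    set σ' := (c * t₂)⁻¹ with hσ'def
    have hσpos : 0 < σ := inv_pos.2 (mul_pos hcpos ht₁)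
    have hσ'pos : 0 < σ' := inv_pos.2 (mul_pos hcpos ht₂)
    have hσ'σ : σ' ≤ σ := by
      apply inv_anti₀ (mul_pos hcpos ht₁)
      nlinarith
    have hm1 : ((y, σ) : EuclideanSpace ℝ (Fin n) × ℝ) ∈ perspBody f := by
      show persp f (y, σ) ≤ 1
      rw [key t₁ ht₁]
      have heq : f (t₁ • x) / (ENNReal.ofReal c * ENNReal.ofReal t₁) = v / ENNReal.ofReal c := by
        rw [hv, div_eq_mul_inv, div_eq_mul_inv, div_eq_mul_inv,
            ENNReal.mul_inv (Or.inl (ENNReal.ofReal_pos.2 hcpos).ne') (Or.inl ENNReal.ofReal_ne_top)]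
        ring
      rw [heq, hcv, ENNReal.div_self hv0 hvt]
    have hm2 : ((y, -σ) : EuclideanSpace ℝ (Fin n) × ℝ) ∈ perspBody f := by
      show persp f (y, -σ) ≤ 1
      rw [persp_abs, abs_neg, abs_of_pos hσpos]
      exact hm1
    set lam := (σ + σ') / (2 * σ) with hlamdef
    set mu := (σ - σ') / (2 * σ) with hmudef
    have hlam : 0 ≤ lam := by positivity
    have hmu : 0 ≤ mu := by
      apply div_nonneg _ (by positivity)
      linarith
    have hsum : lam + mu = 1 := by
      rw [hlamdef, hmudef]
      field_simp
      ring
    have hmem := hC hm1 hm2 hlam hmu hsum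
    have hcomb : lam • ((y, σ) : EuclideanSpace ℝ (Fin n) × ℝ) + mu • (y, -σ) = (y, σ') := by
      rw [Prod.smul_mk, Prod.smul_mk, Prod.mk_add_mk, Prod.mk.injEq]
      constructor
      · rw [← add_smul, hsum, one_smul]
      · rw [smul_eq_mul, smul_eq_mul, hlamdef, hmudef]
        field_simp
        ring
    rw [hcomb] at hmem
    have hmem' : persp f (y, σ') ≤ 1 := hmem
    rw [key t₂ ht₂] at hmem'
    have hCT0 : ENNReal.ofReal c * ENNReal.ofReal t₂ ≠ 0 :=
      mul_ne_zero (ENNReal.ofReal_pos.2 hcpos).ne' (ENNReal.ofReal_pos.2 ht₂).ne'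
    have hCTt : ENNReal.ofReal c * ENNReal.ofReal t₂ ≠ ⊤ :=
      ENNReal.mul_ne_top ENNReal.ofReal_ne_top ENNReal.ofReal_ne_top
    rw [ENNReal.div_le_iff_le_mul (Or.inl hCT0) (Or.inl hCTt), one_mul] at hmem'
    rw [← hcv, ENNReal.div_le_iff_le_mul (Or.inl (ENNReal.ofReal_pos.2 ht₂).ne')
        (Or.inl ENNReal.ofReal_ne_top)]
    exact hmem'
  · intro hmono
    rintro ⟨x₁, s₁⟩ hp ⟨x₂, s₂⟩ hq a b ha hb hab
    rcases ha.eq_or_lt with h | ha'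
    · have hb1 : b = 1 := by linarith
      simpa [← h, hb1] using hq
    rcases hb.eq_or_lt with h | hb'
    · have ha1 : a = 1 := by linarith
      simpa [← h, ha1] using hp
    have hp1 : persp f (x₁, |s₁|) ≤ 1 := by rw [← persp_abs]; exact hp
    have hq1 : persp f (x₂, |s₂|) ≤ 1 := by rw [← persp_abs]; exact hq
    show persp f (a • x₁ + b • x₂, a * s₁ + b * s₂) ≤ 1
    rw [persp_abs]
    have habs : |a * s₁ + b * s₂| ≤ a * |s₁| + b * |s₂| := by
      calc |a * s₁ + b * s₂| ≤ |a * s₁| + |b * s₂| := abs_add_le _ _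
        _ = a * |s₁| + b * |s₂| := by rw [abs_mul, abs_mul, abs_of_nonneg ha, abs_of_nonneg hb]
    exact (persp_mono f hmono _ (abs_nonneg _) habs).trans
      (persp_comb f hfconv hmono x₁ x₂ (abs_nonneg _) (abs_nonneg _) ha hb hab hp1 hq1)
end

section
/- Let f : ℝⁿ → (0,∞) ∪ {+∞} be convex and lower semicontinuous, with lim_{t→+∞} f(tx) = +∞ for every x ≠ 0, and whose effective domain has nonempty interior. Then for every m > 0, ∫_{ℝⁿ} f(z)^{−(m+n)} dz = ((m+n)/2) · ∫_{C(f)} |s|^{m−1} ds dx. -/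
open MeasureTheory Set Filter
open scoped RealInnerProductSpace ENNReal Topology

open MeasureTheory Set Filter
open scoped ENNReal Topology

lemma lint_Ioc (p r : ℝ) (hp : 0 < p) (hr : 0 ≤ r) :
    ∫⁻ s in Ioc (0:ℝ) r, ENNReal.ofReal (s ^ (p-1)) = ENNReal.ofReal (r ^ p / p) := by
  have hint : IntegrableOn (fun s : ℝ => s ^ (p-1)) (Ioc 0 r) := by
    rw [← intervalIntegrable_iff_integrableOn_Ioc_of_le hr]
    exact intervalIntegral.intervalIntegrable_rpow' (by linarith)
  rw [← ofReal_integral_eq_lintegral_ofReal hint]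
  · congr 1
    rw [← intervalIntegral.integral_of_le hr, integral_rpow (Or.inl (by linarith))]
    rw [sub_add_cancel, Real.zero_rpow hp.ne']
    ring
  · filter_upwards [ae_restrict_mem measurableSet_Ioc] with s hs
    exact Real.rpow_nonneg hs.1.le _

lemma lint_Icc_abs (p r : ℝ) (hp : 0 < p) (hr : 0 ≤ r) :
    ∫⁻ s in Icc (-r) r, ENNReal.ofReal (|s| ^ (p-1))
      = ENNReal.ofReal (2 / p) * ENNReal.ofReal (r ^ p) := by
  have hpos : ∫⁻ s in Ioc (0:ℝ) r, ENNReal.ofReal (|s| ^ (p-1))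
      = ENNReal.ofReal (r ^ p / p) := by
    rw [setLIntegral_congr_fun measurableSet_Ioc
      (fun s hs => by rw [abs_of_pos hs.1])]
    exact lint_Ioc p r hp hr
  have hIcc : ∫⁻ s in Icc (0:ℝ) r, ENNReal.ofReal (|s| ^ (p-1))
      = ENNReal.ofReal (r ^ p / p) := by
    rw [← hpos]
    exact setLIntegral_congr (Ioc_ae_eq_Icc).symm
  have hneg : ∫⁻ s in Ico (-r) (0:ℝ), ENNReal.ofReal (|s| ^ (p-1))
      = ENNReal.ofReal (r ^ p / p) := by
    have hmp : MeasurePreserving (fun x : ℝ => -x) volume volume :=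
      Measure.measurePreserving_neg _
    have hemb : MeasurableEmbedding (fun x : ℝ => -x) :=
      (Homeomorph.neg ℝ).measurableEmbedding
    have := hmp.setLIntegral_comp_preimage_emb hemb
      (fun s => ENNReal.ofReal (|s| ^ (p-1))) (Ico (-r) 0)
    have hpre : (fun x : ℝ => -x) ⁻¹' Ico (-r) 0 = Ioc 0 r := by
      ext x; simp [neg_lt, lt_neg, and_comm]
    rw [hpre] at this
    rw [← this, ← hpos]
    exact lintegral_congr fun s => by rw [abs_neg]
  have hsplit : Icc (-r) r = Ico (-r) 0 ∪ Icc 0 r :=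
    (Ico_union_Icc_eq_Icc (by linarith) hr).symm
  have hdisj : Disjoint (Ico (-r) (0:ℝ)) (Icc 0 r) := by
    apply Set.disjoint_left.mpr
    rintro x ⟨_, hx0⟩ ⟨hx0', _⟩; linarith
  rw [hsplit, lintegral_union measurableSet_Icc hdisj, hneg, hIcc,
    ← ENNReal.ofReal_add (by positivity) (by positivity),
    ← ENNReal.ofReal_mul (by positivity)]
  congr 1
  ring

/-- If `f : ℝⁿ → (0,∞) ∪ {+∞}` is convex, lower semicontinuous, with `f(tx) → +∞` as
`t → +∞` for every `x ≠ 0`, and `dom(f)` has nonempty interior, then for every `m > 0`,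
`∫_{ℝⁿ} f(z)^{−(m+n)} dz = ((m+n)/2) · ∫_{C(f)} |s|^{m−1} ds dx` (an identity in `[0,∞]`). -/
theorem integral_pow_eq_perspBody (n : ℕ) (f : EuclideanSpace ℝ (Fin n) → ℝ≥0∞)
    (hfpos : ∀ x, f x ≠ 0)
    (hfconv : ∀ x y : EuclideanSpace ℝ (Fin n), ∀ a b : ℝ, 0 ≤ a → 0 ≤ b → a + b = 1 →
      f (a • x + b • y) ≤ ENNReal.ofReal a * f x + ENNReal.ofReal b * f y)
    (hflsc : LowerSemicontinuous f)
    (hftend : ∀ x : EuclideanSpace ℝ (Fin n), x ≠ 0 →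
      Tendsto (fun t : ℝ => f (t • x)) atTop (𝓝 ⊤))
    (hdom : (interior {x | f x ≠ ⊤}).Nonempty)
    (m : ℝ) (hm : 0 < m) :
    ∫⁻ z, (f z) ^ (-(m + n))
      = ENNReal.ofReal ((m + n) / 2)
        * ∫⁻ p in perspBody f, ENNReal.ofReal (|p.2| ^ (m - 1)) := by
  classical
  set p : ℝ := m + n with hpdef
  have hp : 0 < p := by positivity
  have hfm : Measurable f := hflsc.measurable
  have hrm : ∀ c : ℝ, Measurable fun x : ℝ => x ^ c := fun c => by measurability
  -- the "nice" version of the body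
  set S : Set (EuclideanSpace ℝ (Fin n) × ℝ) :=
    {q | q.2 ≠ 0 ∧ ENNReal.ofReal |q.2| * f (|q.2|⁻¹ • q.1) ≤ 1} with hSdef
  have hmeas_smul : Measurable fun q : EuclideanSpace ℝ (Fin n) × ℝ => f (|q.2|⁻¹ • q.1) :=
    hfm.comp ((measurable_snd.abs.inv).smul measurable_fst)
  have hSm : MeasurableSet S := by
    apply MeasurableSet.inter
    · exact (measurableSet_singleton (0:ℝ)).preimage measurable_snd |>.compl
    · exact measurableSet_preimage ((measurable_snd.abs.ennreal_ofReal).mul hmeas_smul)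
        measurableSet_Iic
  have hnull : (volume : Measure (EuclideanSpace ℝ (Fin n) × ℝ))
      {q | q.2 = 0} = 0 := by
    have : {q : EuclideanSpace ℝ (Fin n) × ℝ | q.2 = 0}
        = (univ : Set (EuclideanSpace ℝ (Fin n))) ×ˢ ({0} : Set ℝ) := by
      ext q
      simp only [Set.mem_setOf_eq, Set.mem_prod, Set.mem_univ, Set.mem_singleton_iff, true_and]
    rw [this, Measure.volume_eq_prod, Measure.prod_prod, Real.volume_singleton, mul_zero]
  -- replace perspBody by S
  have hae : perspBody f =ᵐ[volume] S := by
    rw [MeasureTheory.ae_eq_set]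
    constructor
    · refine measure_mono_null (fun q hq => ?_) hnull
      by_contra h2
      simp only [Set.mem_setOf_eq] at h2
      exact hq.2 ⟨h2, by have := hq.1; rwa [perspBody, Set.mem_setOf_eq, persp, if_neg h2] at this⟩
    · refine measure_mono_null (fun q hq => ?_) hnull
      by_contra h2
      simp only [Set.mem_setOf_eq] at h2
      exact hq.2 (by rw [perspBody, Set.mem_setOf_eq, persp, if_neg hq.1.1]; exact hq.1.2)
  rw [setLIntegral_congr hae]
  -- the auxiliary integrand
  set φ : EuclideanSpace ℝ (Fin n) × ℝ → ℝ≥0∞ :=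
    fun q => if f q.1 ≤ (ENNReal.ofReal |q.2|)⁻¹ then ENNReal.ofReal (|q.2| ^ (p - 1)) else 0
    with hφdef
  have hφm : Measurable φ := by
    refine Measurable.ite (measurableSet_le (hfm.comp measurable_fst)
      (measurable_snd.abs.ennreal_ofReal.inv)) ?_ measurable_const
    exact ((hrm (p-1)).comp measurable_snd.abs).ennreal_ofReal
  -- Step B : Fubini on the body integral
  have hB : ∫⁻ q in S, ENNReal.ofReal (|q.2| ^ (m - 1))
      = ∫⁻ s : ℝ, ∫⁻ x, S.indicator (fun q => ENNReal.ofReal (|q.2| ^ (m - 1))) (x, s) := by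
    rw [← lintegral_indicator hSm, Measure.volume_eq_prod]
    exact lintegral_prod_symm _
      ((((hrm (m-1)).comp measurable_snd.abs).ennreal_ofReal.indicator hSm).aemeasurable)
  -- Step C : for a.e. s, rescale the inner integral
  have hC : ∫⁻ s : ℝ, ∫⁻ x, S.indicator (fun q => ENNReal.ofReal (|q.2| ^ (m - 1))) (x, s)
      = ∫⁻ s : ℝ, ∫⁻ x, φ (x, s) := by
    have h0 : (volume : Measure ℝ) {0} = 0 := Real.volume_singleton
    refine lintegral_congr_ae ?_
    filter_upwards [compl_mem_ae_iff.mpr h0] with s hs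
    simp only [Set.mem_compl_iff, Set.mem_singleton_iff] at hs
    have habs : (0:ℝ) < |s| := abs_pos.mpr hs
    have hofs0 : (ENNReal.ofReal |s|) ≠ 0 := by
      rw [ne_eq, ENNReal.ofReal_eq_zero, not_le]; exact habs
    have hcond : ∀ t : ℝ≥0∞, (ENNReal.ofReal |s| * t ≤ 1 ↔ t ≤ (ENNReal.ofReal |s|)⁻¹) :=
      fun t => by rw [ENNReal.mul_le_iff_le_inv hofs0 ENNReal.ofReal_ne_top, mul_one]
    set c : ℝ≥0∞ := (ENNReal.ofReal |s|)⁻¹ with hcdef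
    set A : Set (EuclideanSpace ℝ (Fin n)) := f ⁻¹' (Iic c) with hAdef
    have hAm : MeasurableSet A := hfm measurableSet_Iic
    have hL : ∫⁻ x, S.indicator (fun q => ENNReal.ofReal (|q.2| ^ (m - 1))) (x, s)
        = ENNReal.ofReal (|s| ^ (m - 1)) * volume ((fun x => |s|⁻¹ • x) ⁻¹' A) := by
      have heq : ∀ x, S.indicator (fun q => ENNReal.ofReal (|q.2| ^ (m - 1))) (x, s)
          = ((fun x => |s|⁻¹ • x) ⁻¹' A).indicator
              (fun _ => ENNReal.ofReal (|s| ^ (m - 1))) x := by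
        intro x
        rw [Set.indicator_apply, Set.indicator_apply]
        refine if_congr ?_ rfl rfl
        simp only [hSdef, Set.mem_setOf_eq, Set.mem_preimage, hAdef, Set.mem_Iic]
        rw [hcond]
        exact and_iff_right hs
      simp_rw [heq]
      rw [lintegral_indicator (hAm.preimage (measurable_const_smul _)), setLIntegral_const]
    have hR : ∫⁻ x, φ (x, s)
        = ENNReal.ofReal (|s| ^ (p - 1)) * volume A := by
      have heq : ∀ x, φ (x, s)
          = A.indicator (fun _ => ENNReal.ofReal (|s| ^ (p - 1))) x := by
        intro x
        rw [hφdef, Set.indicator_apply]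
        simp only [hAdef, Set.mem_preimage, Set.mem_Iic, hcdef]
      simp_rw [heq]
      rw [lintegral_indicator hAm, setLIntegral_const]
    rw [hL, hR]
    rw [Measure.addHaar_preimage_smul volume (inv_ne_zero habs.ne') A]
    rw [← mul_assoc]
    congr 1
    rw [finrank_euclideanSpace_fin, inv_pow, inv_inv,
      abs_of_nonneg (pow_nonneg (abs_nonneg s) n),
      ← ENNReal.ofReal_mul (Real.rpow_nonneg (abs_nonneg s) _)]
    congr 1
    rw [← Real.rpow_natCast |s| n, ← Real.rpow_add habs]
    congr 1
    rw [hpdef]; ring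
  -- Step D : swap the order of integration
  have hD : ∫⁻ s : ℝ, ∫⁻ x, φ (x, s) = ∫⁻ x, ∫⁻ s : ℝ, φ (x, s) :=
    (lintegral_lintegral_swap hφm.aemeasurable).symm
  -- Step E : the inner integral in s
  have hE : ∀ z, ∫⁻ s : ℝ, φ (z, s) = ENNReal.ofReal (2 / p) * f z ^ (-p) := by
    intro z
    set r : ℝ := ((f z)⁻¹).toReal with hrdef
    have hr0 : 0 ≤ r := ENNReal.toReal_nonneg
    have hinv_ne_top : (f z)⁻¹ ≠ ⊤ := ENNReal.inv_ne_top.mpr (hfpos z)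
    have hofr : ENNReal.ofReal r = (f z)⁻¹ := ENNReal.ofReal_toReal hinv_ne_top
    have hcond : ∀ s : ℝ, (f z ≤ (ENNReal.ofReal |s|)⁻¹ ↔ s ∈ Icc (-r) r) := by
      intro s
      rw [ENNReal.le_inv_iff_le_inv, ← hofr, ENNReal.ofReal_le_ofReal_iff hr0]
      rw [abs_le, Set.mem_Icc]
    have heq : ∀ s : ℝ, φ (z, s)
        = (Icc (-r) r).indicator (fun s => ENNReal.ofReal (|s| ^ (p - 1))) s := by
      intro s
      rw [hφdef, Set.indicator_apply]
      exact if_congr (hcond s) rfl rfl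
    simp_rw [heq]
    rw [lintegral_indicator measurableSet_Icc, lint_Icc_abs p r hp hr0]
    congr 1
    rw [← ENNReal.ofReal_rpow_of_nonneg hr0 hp.le, hofr, ENNReal.inv_rpow,
      ← ENNReal.rpow_neg]
  -- Assemble everything
  rw [hB, hC, hD]
  simp_rw [hE]
  rw [lintegral_const_mul' _ _ ENNReal.ofReal_ne_top, ← mul_assoc,
    ← ENNReal.ofReal_mul (by positivity)]
  have : (m + ↑n) / 2 * (2 / p) = 1 := by
    rw [hpdef]; field_simp
  rw [this, ENNReal.ofReal_one, one_mul]
end
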